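/- Let n ≥ 1, E = EuclideanSpace ℝ (Fin n), U ⊆ E open, and let u : E → ℝ be C² on U and harmonic on U, i.e. ∑ᵢ D²u(x)[eᵢ, eᵢ] = 0 for every x ∈ U, where (eᵢ) is the standard orthonormal basis and D²u = iteratedFDeriv ℝ 2 u. Let φ : E → ℝ be C¹ with compact support and tsupport φ ⊆ U. Then ∫_U ‖∇u(x)‖² φ(x)² dx ≤ 4 ∫_U u(x)² ‖∇φ(x)‖² dx, where ∇ denotes the gradient and the integrals are with respect to Lebesgue measure on E. -/

import Mathlib

set_option maxHeartbeats 1000000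

open MeasureTheory Set Function Filter Topology
open scoped Manifold


lemma grad_inner {n : ℕ} (f : EuclideanSpace ℝ (Fin n) → ℝ) (x y : EuclideanSpace ℝ (Fin n)) :
    @inner ℝ _ _ (gradient f x) y = fderiv ℝ f x y := by
  rw [← InnerProductSpace.toDual_apply_apply, gradient, LinearIsometryEquiv.apply_symm_apply]

lemma grad_inner' {n : ℕ} (f : EuclideanSpace ℝ (Fin n) → ℝ) (x y : EuclideanSpace ℝ (Fin n)) :
    @inner ℝ _ _ y (gradient f x) = fderiv ℝ f x y := by
  rw [real_inner_comm, grad_inner]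

lemma grad_norm_sq {n : ℕ} (f : EuclideanSpace ℝ (Fin n) → ℝ) (x : EuclideanSpace ℝ (Fin n)) :
    ‖gradient f x‖ ^ 2 = ∑ i, (fderiv ℝ f x (EuclideanSpace.single i (1:ℝ))) ^ 2 := by
  have h := (EuclideanSpace.basisFun (Fin n) ℝ).sum_inner_mul_inner (gradient f x) (gradient f x)
  rw [real_inner_self_eq_norm_sq] at h
  rw [← h]
  refine Finset.sum_congr rfl fun i _ => ?_
  simp only [EuclideanSpace.basisFun_apply, grad_inner, grad_inner', sq]

lemma grad_inner_grad {n : ℕ} (f g : EuclideanSpace ℝ (Fin n) → ℝ) (x : EuclideanSpace ℝ (Fin n)) :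
    @inner ℝ _ _ (gradient f x) (gradient g x)
      = ∑ i, (fderiv ℝ f x (EuclideanSpace.single i (1:ℝ)))
          * (fderiv ℝ g x (EuclideanSpace.single i (1:ℝ))) := by
  rw [← (EuclideanSpace.basisFun (Fin n) ℝ).sum_inner_mul_inner (gradient f x) (gradient g x)]
  refine Finset.sum_congr rfl fun i _ => ?_
  simp only [EuclideanSpace.basisFun_apply, grad_inner, grad_inner']

lemma grad_continuous {n : ℕ} {f : EuclideanSpace ℝ (Fin n) → ℝ} {m : ℕ∞} (hm : 1 ≤ m)
    (hf : ContDiff ℝ (m+1) f) : Continuous (gradient f) := by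
  have : Continuous (fderiv ℝ f) := hf.continuous_fderiv (by simp)
  exact (InnerProductSpace.toDual ℝ _).symm.continuous.comp this

lemma caccioppoli_global (n : ℕ) (v φ : EuclideanSpace ℝ (Fin n) → ℝ)
    (hv : ContDiff ℝ 2 v) (hvc : HasCompactSupport v)
    (hφ : ContDiff ℝ 1 φ) (hφc : HasCompactSupport φ)
    (hΔ : ∀ x, φ x ≠ 0 → ∑ i, fderiv ℝ (fderiv ℝ v) x (EuclideanSpace.single i (1:ℝ))
        (EuclideanSpace.single i (1:ℝ)) = 0) :
    ∫ x, ‖gradient v x‖ ^ 2 * φ x ^ 2 ≤ 4 * ∫ x, v x ^ 2 * ‖gradient φ x‖ ^ 2 := by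
  set e : Fin n → EuclideanSpace ℝ (Fin n) := fun i => EuclideanSpace.single i (1:ℝ) with he
  -- basic regularity
  have hv1 : Differentiable ℝ v := hv.differentiable two_ne_zero
  have hφ1 : Differentiable ℝ φ := hφ.differentiable one_ne_zero
  have hdv : ContDiff ℝ 1 (fderiv ℝ v) := hv.fderiv_right (by norm_num)
  have hgi : ∀ i, ContDiff ℝ 1 (fun x => fderiv ℝ v x (e i)) := fun i =>
    (ContinuousLinearMap.apply ℝ ℝ (e i)).contDiff.comp hdv
  have hgradv : Continuous (gradient v) := grad_continuous le_rfl (by exact_mod_cast hv)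
  have hgradφc : Continuous (gradient φ) :=
    (InnerProductSpace.toDual ℝ _).symm.continuous.comp (hφ.continuous_fderiv one_ne_zero)
  -- the test function f = v φ²
  set f : EuclideanSpace ℝ (Fin n) → ℝ := fun x => v x * (φ x * φ x) with hfdef
  have hf : ContDiff ℝ 1 f := (hv.of_le one_le_two).mul (hφ.mul hφ)
  have hfsupp : ∀ x, x ∉ tsupport φ → f x = 0 := fun x hx => by
    simp [hfdef, image_eq_zero_of_notMem_tsupport hx]
  have hftsupp : tsupport f ⊆ tsupport φ := by
    refine closure_minimal (fun x hx => ?_) (isClosed_tsupport φ)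
    by_contra h
    exact hx (hfsupp x h)
  -- the derivative of f
  have hdfeq : ∀ x i, fderiv ℝ f x (e i)
      = fderiv ℝ v x (e i) * φ x ^ 2 + v x * (2 * φ x * fderiv ℝ φ x (e i)) := by
    intro x i
    have h2 := ((hv1 x).hasFDerivAt).mul (((hφ1 x).hasFDerivAt).mul ((hφ1 x).hasFDerivAt))
    rw [hfdef, show (fun x => v x * (φ x * φ x)) = v * (φ * φ) from rfl, h2.fderiv]
    simp only [ContinuousLinearMap.add_apply, ContinuousLinearMap.smul_apply, smul_eq_mul, Pi.mul_apply]
    ring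
  -- integrability helper
  have hint : ∀ g : EuclideanSpace ℝ (Fin n) → ℝ, Continuous g →
      (∀ x, x ∉ tsupport φ → g x = 0) → Integrable g := fun g hg hsupp =>
    hg.integrable_of_hasCompactSupport (HasCompactSupport.intro hφc hsupp)
  have hcontdf : Continuous (fun x => fderiv ℝ f x) := hf.continuous_fderiv one_ne_zero
  have hdfzero : ∀ x, x ∉ tsupport φ → fderiv ℝ f x = 0 := fun x hx =>
    Function.notMem_support.1 fun h => hx (hftsupp (support_fderiv_subset (𝕜 := ℝ) h))
  -- second derivatives
  have hsecond : ∀ x i, fderiv ℝ (fun y => fderiv ℝ v y (e i)) x (e i)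
      = fderiv ℝ (fderiv ℝ v) x (e i) (e i) := by
    intro x i
    have := fderiv_clm_apply (𝕜 := ℝ) (hdv.differentiable one_ne_zero x)
      (differentiableAt_const (e i))
    rw [this]
    simp
  -- integration by parts in each direction
  have ibp : ∀ i, ∫ x, f x * fderiv ℝ (fun y => fderiv ℝ v y (e i)) x (e i)
      = - ∫ x, fderiv ℝ f x (e i) * fderiv ℝ v x (e i) := by
    intro i
    refine integral_mul_fderiv_eq_neg_fderiv_mul_of_integrable ?_ ?_ ?_
      (fun x _ => hf.differentiable one_ne_zero x) (fun x _ => (hgi i).differentiable one_ne_zero x)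
    · refine hint _ (((ContinuousLinearMap.apply ℝ ℝ (e i)).continuous.comp hcontdf).mul
        ((hgi i).continuous)) fun x hx => by simp [hdfzero x hx]
    · refine hint _ ((hf.continuous).mul ((ContinuousLinearMap.apply ℝ ℝ (e i)).continuous.comp
        ((hgi i).continuous_fderiv one_ne_zero))) fun x hx => by simp [hfsupp x hx]
    · exact hint _ ((hf.continuous).mul ((hgi i).continuous)) fun x hx => by
        simp [hfsupp x hx]
  -- each summand is integrable
  have hvcont : Continuous v := hv.continuous
  have hφcont : Continuous φ := hφ.continuous
  have hintA : Integrable (fun x => ‖gradient v x‖ ^ 2 * φ x ^ 2) := by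
    refine hint _ (((hgradv.norm).pow 2).mul (hφcont.pow 2)) fun x hx => by
      simp [image_eq_zero_of_notMem_tsupport hx]
  have hintB : Integrable (fun x => v x ^ 2 * ‖gradient φ x‖ ^ 2) := by
    refine hint _ ((hvcont.pow 2).mul ((hgradφc.norm).pow 2)) fun x hx => ?_
    have : fderiv ℝ φ x = 0 :=
      Function.notMem_support.1 fun h => hx (support_fderiv_subset (𝕜 := ℝ) h)
    simp [gradient, this]
  have hintC : Integrable (fun x => 2 * v x * φ x *
      @inner ℝ _ _ (gradient φ x) (gradient v x)) := by
    refine hint _ (((continuous_const.mul hvcont).mul hφcont).mul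
      (hgradφc.inner hgradv)) fun x hx => by
      simp [image_eq_zero_of_notMem_tsupport hx]
  -- sum of left sides is 0
  have hsum0 : ∑ i, ∫ x, f x * fderiv ℝ (fun y => fderiv ℝ v y (e i)) x (e i) = 0 := by
    rw [← integral_finset_sum]
    · rw [← integral_zero (EuclideanSpace ℝ (Fin n)) ℝ]
      congr 1
      funext x
      simp only [← Finset.mul_sum]
      rcases eq_or_ne (φ x) 0 with h | h
      · simp [hfdef, h]
      · simp only [hsecond]
        rw [hΔ x h, mul_zero]
    · intro i _
      exact hint _ ((hf.continuous).mul ((ContinuousLinearMap.apply ℝ ℝ (e i)).continuous.comp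
        ((hgi i).continuous_fderiv one_ne_zero))) fun x hx => by simp [hfsupp x hx]
  -- hence sum of right sides is 0
  have hsum1 : ∫ x, (‖gradient v x‖ ^ 2 * φ x ^ 2
      + 2 * v x * φ x * @inner ℝ _ _ (gradient φ x) (gradient v x)) = 0 := by
    have h1 : ∀ i, Integrable (fun x => fderiv ℝ f x (e i) * fderiv ℝ v x (e i)) := fun i =>
      hint _ (((ContinuousLinearMap.apply ℝ ℝ (e i)).continuous.comp hcontdf).mul
        ((hgi i).continuous)) fun x hx => by simp [hdfzero x hx]
    have h2 : ∑ i, ∫ x, fderiv ℝ f x (e i) * fderiv ℝ v x (e i) = 0 := by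
      have := hsum0
      simp only [ibp] at this
      rw [Finset.sum_neg_distrib, neg_eq_zero] at this
      exact this
    rw [← integral_finset_sum _ fun i _ => h1 i] at h2
    rw [← h2]
    congr 1
    funext x
    rw [grad_norm_sq, grad_inner_grad, Finset.sum_mul, Finset.mul_sum,
      ← Finset.sum_add_distrib]
    exact Finset.sum_congr rfl fun i _ => by rw [hdfeq]; ring
  -- pointwise AM-GM bound and conclusion
  have hptwise : ∀ x, -(2 * v x * φ x * @inner ℝ _ _ (gradient φ x) (gradient v x))
      ≤ (1/2) * (‖gradient v x‖ ^ 2 * φ x ^ 2) + 2 * (v x ^ 2 * ‖gradient φ x‖ ^ 2) := by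
    intro x
    set c : ℝ := @inner ℝ _ _ (gradient φ x) (gradient v x) with hc
    have h0 : -(2 * v x * φ x * c)
        ≤ 2 * (|v x| * |φ x| * (‖gradient φ x‖ * ‖gradient v x‖)) := by
      have h1 : -(2 * v x * φ x * c) ≤ |2 * v x * φ x * c| := neg_le_abs _
      have h2 : |2 * v x * φ x * c| = 2 * (|v x| * |φ x| * |c|) := by
        rw [abs_mul, abs_mul, abs_mul, abs_two]; ring
      have h3 : |c| ≤ ‖gradient φ x‖ * ‖gradient v x‖ := abs_real_inner_le_norm _ _
      have h4 : (0:ℝ) ≤ |v x| * |φ x| := mul_nonneg (abs_nonneg _) (abs_nonneg _)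
      nlinarith [h1, h2, h3, h4]
    refine h0.trans ?_
    nlinarith [sq_nonneg (|φ x| * ‖gradient v x‖ - 2 * |v x| * ‖gradient φ x‖),
      sq_abs (φ x), sq_abs (v x), abs_nonneg (φ x), abs_nonneg (v x),
      norm_nonneg (gradient v x), norm_nonneg (gradient φ x)]
  have hA : ∫ x, ‖gradient v x‖ ^ 2 * φ x ^ 2
      = ∫ x, -(2 * v x * φ x * @inner ℝ _ _ (gradient φ x) (gradient v x)) := by
    have := integral_add hintA hintC
    rw [hsum1] at this
    rw [integral_neg]
    linarith [this.symm]
  have hmono : ∫ x, -(2 * v x * φ x * @inner ℝ _ _ (gradient φ x) (gradient v x))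
      ≤ ∫ x, ((1/2) * (‖gradient v x‖ ^ 2 * φ x ^ 2) + 2 * (v x ^ 2 * ‖gradient φ x‖ ^ 2)) :=
    integral_mono hintC.neg (by exact (hintA.const_mul _).add (hintB.const_mul _))
      fun x => hptwise x
  rw [integral_add (hintA.const_mul _) (hintB.const_mul _), integral_const_mul,
    integral_const_mul] at hmono
  rw [hA]
  linarith [hmono]

/-- Caccioppoli-type inequality for harmonic functions: if `u` is `C²` and
harmonic on an open set `U` and `φ` is `C¹` with compact support contained in
`U`, then `∫ ‖∇u‖² φ² ≤ 4 ∫ u² ‖∇φ‖²`. -/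
theorem harmonic_caccioppoli
    (n : ℕ) (hn : 1 ≤ n)
    (U : Set (EuclideanSpace ℝ (Fin n))) (hU : IsOpen U)
    (u φ : EuclideanSpace ℝ (Fin n) → ℝ)
    (hu : ContDiffOn ℝ 2 u U)
    (hharm : ∀ x ∈ U, ∑ i, iteratedFDeriv ℝ 2 u x
      ![EuclideanSpace.single i (1 : ℝ), EuclideanSpace.single i (1 : ℝ)] = 0)
    (hφ : ContDiff ℝ 1 φ) (hφc : HasCompactSupport φ) (hφU : tsupport φ ⊆ U) :
    ∫ x in U, ‖gradient u x‖ ^ 2 * (φ x) ^ 2 ≤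
      4 * ∫ x in U, (u x) ^ 2 * ‖gradient φ x‖ ^ 2 := by
  classical
  have hKc : IsCompact (tsupport φ) := hφc
  obtain ⟨L, hL, hKL, hLU⟩ := exists_compact_between hKc hU hφU
  obtain ⟨χ, h0, h1, -⟩ := exists_contMDiffMap_zero_one_of_isClosed (n := ⊤) (𝓘(ℝ, EuclideanSpace ℝ (Fin n)))
    isOpen_interior.isClosed_compl hKc.isClosed
    (by rw [Set.disjoint_compl_left_iff_subset]; exact hKL)
  have hχ2 : ContDiff ℝ 2 ⇑χ :=
    (contMDiff_iff_contDiff.1 χ.contMDiff).of_le (by exact WithTop.coe_le_coe.2 le_top)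
  have hχ0 : ∀ x ∉ interior L, χ x = 0 := fun x hx => h0 hx
  have hχts : tsupport ⇑χ ⊆ L := by
    refine closure_minimal (fun x hx => ?_) hL.isClosed
    by_contra h
    exact hx (hχ0 x fun h' => h (interior_subset h'))
  set v : EuclideanSpace ℝ (Fin n) → ℝ := fun x => χ x * u x with hvdef
  -- openness of support φ
  have hso : IsOpen (support φ) := by
    rw [Function.support_eq_preimage]
    exact (isOpen_compl_singleton).preimage hφ.continuous
  have hsupp_int : support φ ⊆ interior (tsupport φ) :=
    interior_maximal (subset_tsupport φ) hso
  have hveq : ∀ x ∈ interior (tsupport φ), v =ᶠ[𝓝 x] u := fun x hx =>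
    eventually_of_mem (isOpen_interior.mem_nhds hx)
      (fun y hy => by simp [hvdef, h1 (interior_subset hy)])
  have hvC2 : ContDiff ℝ 2 v := by
    rw [contDiff_iff_contDiffAt]
    intro x
    by_cases hx : x ∈ U
    · exact ((hχ2.contDiffOn).mul hu).contDiffAt (hU.mem_nhds hx)
    · have hxn : x ∉ tsupport ⇑χ := fun h => hx (hLU (hχts h))
      have hev : v =ᶠ[𝓝 x] (fun _ => (0:ℝ)) :=
        eventually_of_mem ((isClosed_tsupport _).isOpen_compl.mem_nhds hxn)
          (fun y hy => by simp [hvdef, image_eq_zero_of_notMem_tsupport hy])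
      exact (contDiffAt_const (c := (0:ℝ))).congr_of_eventuallyEq hev
  have hvcs : HasCompactSupport v :=
    HasCompactSupport.intro hL fun x hx => by
      simp [hvdef, hχ0 x fun h => hx (interior_subset h)]
  -- harmonicity transfer
  have hΔ : ∀ x, φ x ≠ 0 → ∑ i, fderiv ℝ (fderiv ℝ v) x (EuclideanSpace.single i (1:ℝ))
      (EuclideanSpace.single i (1:ℝ)) = 0 := by
    intro x hx
    have hxs : x ∈ support φ := hx
    have hfd : fderiv ℝ v =ᶠ[𝓝 x] fderiv ℝ u := by
      refine eventually_of_mem (isOpen_interior.mem_nhds (hsupp_int hxs)) fun y hy => ?_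
      exact (hveq y hy).fderiv_eq
    have h2d : fderiv ℝ (fderiv ℝ v) x = fderiv ℝ (fderiv ℝ u) x := hfd.fderiv_eq
    have hsum := hharm x (hφU (subset_tsupport φ hxs))
    rw [← hsum]
    refine Finset.sum_congr rfl fun i _ => ?_
    rw [iteratedFDeriv_two_apply, h2d]
    simp
  -- integral identities
  have hLHS : ∫ x in U, ‖gradient u x‖ ^ 2 * φ x ^ 2
      = ∫ x, ‖gradient v x‖ ^ 2 * φ x ^ 2 := by
    have heq : (fun x => ‖gradient u x‖ ^ 2 * φ x ^ 2)
        = fun x => ‖gradient v x‖ ^ 2 * φ x ^ 2 := by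
      funext x
      rcases eq_or_ne (φ x) 0 with h | h
      · simp [h]
      · have hgrad : gradient v x = gradient u x := by
          unfold gradient
          rw [(hveq x (hsupp_int h)).fderiv_eq]
        rw [hgrad]
    rw [setIntegral_eq_integral_of_forall_compl_eq_zero fun x hx => by
      simp [image_eq_zero_of_notMem_tsupport fun h => hx (hφU h)], heq]
  have hRHS : ∫ x in U, u x ^ 2 * ‖gradient φ x‖ ^ 2
      = ∫ x, v x ^ 2 * ‖gradient φ x‖ ^ 2 := by
    have heq : (fun x => u x ^ 2 * ‖gradient φ x‖ ^ 2)
        = fun x => v x ^ 2 * ‖gradient φ x‖ ^ 2 := by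
      funext x
      by_cases hx : x ∈ tsupport φ
      · rw [show v x = u x from by simp [hvdef, h1 hx]]
      · have : fderiv ℝ φ x = 0 :=
          Function.notMem_support.1 fun h => hx (support_fderiv_subset (𝕜 := ℝ) h)
        simp [gradient, this]
    have hz : ∀ x, x ∉ U → u x ^ 2 * ‖gradient φ x‖ ^ 2 = 0 := by
      intro x hx
      have hxt : x ∉ tsupport φ := fun h => hx (hφU h)
      have : fderiv ℝ φ x = 0 :=
        Function.notMem_support.1 fun h => hxt (support_fderiv_subset (𝕜 := ℝ) h)
      simp [gradient, this]
    rw [setIntegral_eq_integral_of_forall_compl_eq_zero hz, heq]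
  rw [hLHS, hRHS]
  exact caccioppoli_global n v φ hvC2 hvcs hφ hφc hΔ
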